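/- Let 0 < ε ≤ 1/32, N ∈ ℕ with N ≥ 4, and θ ∈ ℝ with ε/N³ ≤ θ ≤ 1/2. Then the number of pairs of integers (k,j) with N ≤ k ≤ 3N, N ≤ j ≤ 4N, and ε/8 < {θ · a₂(k,j)} < 1 − ε/8 is at least N²/32, where a₂(k,j) := kj(k+j)/2. -/

import Mathlib

open Finset

-- L1
lemma fract_bad_iff (y η : ℝ) (h0 : 0 < η) (h1 : η < 1/2) :
    (¬ (η < Int.fract y ∧ Int.fract y < 1 - η)) ↔ ∃ n : ℤ, |y - (n : ℝ)| ≤ η := by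
  have hfl : y - (⌊y⌋ : ℝ) = Int.fract y := rfl
  have hf0 := Int.fract_nonneg y
  have hf1 := Int.fract_lt_one y
  constructor
  · intro h
    rcases not_and_or.mp h with h' | h'
    · exact ⟨⌊y⌋, by rw [abs_le]; constructor <;> [linarith [le_of_not_gt h']; linarith [le_of_not_gt h']]⟩
    · refine ⟨⌊y⌋ + 1, ?_⟩
      have hf : 1 - η ≤ Int.fract y := le_of_not_gt h'
      rw [abs_le]; push_cast; constructor <;> nlinarith
  · rintro ⟨n, hn⟩ ⟨hl, hr⟩
    have h2 : Int.fract (y - n) = Int.fract y := Int.fract_sub_intCast y n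
    rw [abs_le] at hn
    rcases le_or_gt 0 (y - n) with hs | hs
    · have he : Int.fract (y - n) = y - n := Int.fract_eq_self.mpr ⟨hs, by linarith⟩
      rw [he] at h2; linarith
    · have he : Int.fract (y - n) = y - n + 1 := by
        have h3 : Int.fract (y - n + 1) = y - n + 1 :=
          Int.fract_eq_self.mpr ⟨by linarith, by linarith⟩
        rw [← Int.fract_add_one (y - n)] ; exact h3
      rw [he] at h2; linarith

-- L2
lemma gap_sum (f : ℤ → ℝ) (a b : ℤ) (s : ℝ)
    (hstep : ∀ i, a ≤ i → i < b → s ≤ f (i+1) - f i) :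
    ∀ i, a ≤ i → ∀ j, i ≤ j → j ≤ b → s * ((j : ℝ) - (i : ℝ)) ≤ f j - f i := by
  intro i hai j hij
  refine Int.le_induction (motive := fun j _ => j ≤ b → s * ((j : ℝ) - (i : ℝ)) ≤ f j - f i) ?_ ?_ j hij
  · intro _; norm_num
  · intro j hij ih hjb
    have h2 : s * ((j : ℝ) - (i : ℝ)) ≤ f j - f i := ih (by omega)
    have h1 : s ≤ f (j+1) - f j := hstep j (le_trans hai hij) (by omega)
    push_cast
    nlinarith

open scoped Classical in
-- L3 core counting lemma
lemma count_near_int (f : ℤ → ℝ) (a b : ℤ) (s η : ℝ) (hs : 0 < s) (hη : 0 ≤ η)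
    (hab : a ≤ b)
    (hstep : ∀ i, a ≤ i → i < b → s ≤ f (i+1) - f i) :
    (((Finset.Icc a b).filter (fun i => ∃ n : ℤ, |f i - (n:ℝ)| ≤ η)).card : ℝ) * s
      ≤ (f b - f a + 2*η + 1) * (2*η + s) := by
  have hgap := gap_sum f a b s hstep
  set Bad := (Finset.Icc a b).filter (fun i => ∃ n : ℤ, |f i - (n:ℝ)| ≤ η) with hBad
  set S : ℤ → Finset ℤ := fun n => Bad.filter (fun i => |f i - (n:ℝ)| ≤ η) with hS
  have hW0 : 0 ≤ f b - f a := by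
    have h := hgap a le_rfl b hab le_rfl
    have hc : (a:ℝ) ≤ (b:ℝ) := by exact_mod_cast hab
    nlinarith
  have hcover : Bad ⊆ (Finset.Icc ⌈f a - η⌉ ⌊f b + η⌋).biUnion S := by
    intro i hi
    have hi' := hi
    rw [hBad, mem_filter, mem_Icc] at hi'
    obtain ⟨⟨hia, hib⟩, n, hn⟩ := hi'
    refine mem_biUnion.mpr ⟨n, ?_, mem_filter.mpr ⟨hi, hn⟩⟩
    rw [mem_Icc]
    have hfa : f a ≤ f i := by
      have h := hgap a le_rfl i hia hib
      have hc : (a:ℝ) ≤ (i:ℝ) := by exact_mod_cast hia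
      nlinarith
    have hfb : f i ≤ f b := by
      have h := hgap i hia b hib le_rfl
      have hc : (i:ℝ) ≤ (b:ℝ) := by exact_mod_cast hib
      nlinarith
    rw [abs_le] at hn
    exact ⟨Int.ceil_le.mpr (by push_cast; linarith), Int.le_floor.mpr (by push_cast; linarith)⟩
  have hcard1 : Bad.card ≤ ∑ n ∈ Finset.Icc ⌈f a - η⌉ ⌊f b + η⌋, (S n).card :=
    le_trans (Finset.card_le_card hcover) (Finset.card_biUnion_le)
  have hSbound : ∀ n : ℤ, ((S n).card : ℝ) * s ≤ 2*η + s := by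
    intro n
    rcases Finset.eq_empty_or_nonempty (S n) with he | hne
    · rw [he]; simp; positivity
    · set i₁ := (S n).min' hne
      set i₂ := (S n).max' hne
      have hmem1 := (S n).min'_mem hne
      have hmem2 := (S n).max'_mem hne
      have hsub : ∀ i ∈ S n, a ≤ i ∧ i ≤ b ∧ |f i - (n:ℝ)| ≤ η := by
        intro i hi
        rw [hS, mem_filter, hBad, mem_filter, mem_Icc] at hi
        exact ⟨hi.1.1.1, hi.1.1.2, hi.2⟩
      obtain ⟨ha1, hb1, hn1⟩ := hsub i₁ hmem1
      obtain ⟨ha2, hb2, hn2⟩ := hsub i₂ hmem2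
      have h12 : i₁ ≤ i₂ := Finset.min'_le _ _ hmem2
      have hgap12 : s * ((i₂ : ℝ) - (i₁ : ℝ)) ≤ f i₂ - f i₁ := hgap i₁ ha1 i₂ h12 hb2
      have hdiff : f i₂ - f i₁ ≤ 2*η := by
        rw [abs_le] at hn1 hn2; linarith
      have hsubI : S n ⊆ Finset.Icc i₁ i₂ := fun i hi =>
        Finset.mem_Icc.mpr ⟨Finset.min'_le _ _ hi, Finset.le_max' _ _ hi⟩
      have hcard : ((S n).card : ℝ) ≤ (i₂ : ℝ) - (i₁ : ℝ) + 1 := by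
        have := Finset.card_le_card hsubI
        have hIcc : (Finset.Icc i₁ i₂).card = (i₂ + 1 - i₁).toNat := Int.card_Icc i₁ i₂
        have : ((S n).card : ℤ) ≤ i₂ + 1 - i₁ := by
          rw [hIcc] at this
          omega
        have h5 := (@Int.cast_le ℝ _ _ _).mpr this
        push_cast at h5
        linarith
      nlinarith
  have hNcard : ((Finset.Icc ⌈f a - η⌉ ⌊f b + η⌋).card : ℝ) ≤ f b - f a + 2*η + 1 := by
    rcases le_or_gt ⌈f a - η⌉ ⌊f b + η⌋ with h | h
    · have hIcc : (Finset.Icc ⌈f a - η⌉ ⌊f b + η⌋).card = (⌊f b + η⌋ + 1 - ⌈f a - η⌉).toNat :=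
        Int.card_Icc _ _
      have h1 : ((⌊f b + η⌋ : ℝ)) ≤ f b + η := Int.floor_le _
      have h2 : f a - η ≤ (⌈f a - η⌉ : ℝ) := Int.le_ceil _
      have h3 : ((Finset.Icc ⌈f a - η⌉ ⌊f b + η⌋).card : ℤ) = ⌊f b + η⌋ + 1 - ⌈f a - η⌉ := by
        rw [hIcc]; omega
      have h4 : ((Finset.Icc ⌈f a - η⌉ ⌊f b + η⌋).card : ℝ) = ((⌊f b + η⌋ : ℝ)) + 1 - ((⌈f a - η⌉ : ℝ)) := by
        exact_mod_cast h3
      rw [h4]; linarith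
    · have : Finset.Icc ⌈f a - η⌉ ⌊f b + η⌋ = ∅ := Finset.Icc_eq_empty (by omega)
      rw [this]; simp; linarith
  calc (Bad.card : ℝ) * s ≤ (∑ n ∈ Finset.Icc ⌈f a - η⌉ ⌊f b + η⌋, ((S n).card : ℝ)) * s := by
        apply mul_le_mul_of_nonneg_right _ (le_of_lt hs)
        exact_mod_cast hcard1
    _ = ∑ n ∈ Finset.Icc ⌈f a - η⌉ ⌊f b + η⌋, ((S n).card : ℝ) * s := by rw [Finset.sum_mul]
    _ ≤ ∑ n ∈ Finset.Icc ⌈f a - η⌉ ⌊f b + η⌋, (2*η + s) := Finset.sum_le_sum (fun n _ => hSbound n)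
    _ = ((Finset.Icc ⌈f a - η⌉ ⌊f b + η⌋).card : ℝ) * (2*η + s) := by
        rw [Finset.sum_const, nsmul_eq_mul]
    _ ≤ (f b - f a + 2*η + 1) * (2*η + s) := by
        apply mul_le_mul_of_nonneg_right hNcard
        positivity

noncomputable def Xv (θ : ℝ) (k j : ℤ) : ℝ := θ * (((k * j * (k + j) : ℤ) : ℝ) / 2)

def isGood (θ ε : ℝ) (k j : ℤ) : Prop :=
  ε/8 < Int.fract (Xv θ k j) ∧ Int.fract (Xv θ k j) < 1 - ε/8

lemma stepX (θ : ℝ) (k j : ℤ) :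
    Xv θ k (j+1) - Xv θ k j = θ * ((k:ℝ) * ((k:ℝ) + 2*(j:ℝ) + 1)) / 2 := by
  unfold Xv; push_cast; ring

lemma spanX (θ : ℝ) (k n : ℤ) :
    Xv θ k (4*n) - Xv θ k n = θ * ((k:ℝ) * (3*(k:ℝ)*(n:ℝ) + 15*(n:ℝ)^2)) / 2 := by
  unfold Xv; push_cast; ring

open scoped Classical in
lemma row_split (θ ε : ℝ) (hε : 0 < ε) (hε' : ε ≤ 1/32) (a b : ℤ) (k : ℤ) :
    (((Finset.Icc a b).filter (fun j => isGood θ ε k j)).card : ℝ)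
      = ((Finset.Icc a b).card : ℝ)
        - (((Finset.Icc a b).filter (fun j => ∃ n : ℤ, |Xv θ k j - (n:ℝ)| ≤ ε/8)).card : ℝ) := by
  have hsplit := Finset.card_filter_add_card_filter_not
    (s := Finset.Icc a b) (p := fun j => isGood θ ε k j)
  have hiff : ∀ j, (¬ isGood θ ε k j) ↔ ∃ n : ℤ, |Xv θ k j - (n:ℝ)| ≤ ε/8 := by
    intro j
    exact fract_bad_iff (Xv θ k j) (ε/8) (by linarith) (by linarith)
  have heq : (Finset.Icc a b).filter (fun j => ¬ isGood θ ε k j)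
      = (Finset.Icc a b).filter (fun j => ∃ n : ℤ, |Xv θ k j - (n:ℝ)| ≤ ε/8) := by
    apply Finset.filter_congr
    intro j _
    simp only [hiff]
  rw [← heq]
  have h2 : ((#(Finset.filter (fun j => isGood θ ε k j) (Finset.Icc a b)) : ℝ))
      + (#(Finset.filter (fun j => ¬ isGood θ ε k j) (Finset.Icc a b)) : ℝ)
      = (#(Finset.Icc a b) : ℝ) := by exact_mod_cast congrArg (Nat.cast : ℕ → ℝ) hsplit
  linarith

set_option maxHeartbeats 1000000 in
lemma key1 (ν ε θ : ℝ) (hν : 4 ≤ ν) (hε : 0 < ε) (hε' : ε ≤ 1/32) (hθ0 : 0 < θ)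
    (ht3 : 1/2 < θ*ν^3) (ht2 : θ*ν^2 ≤ 9/52) :
    ((279/25)*θ*ν^3 + 2*(ε/8) + 1) * (2*(ε/8) + (3/2)*θ*ν^2)
      ≤ ((2001/1000)*ν + 101/100) * ((3/2)*θ*ν^2) := by
  have hν0 : (0:ℝ) < ν := by linarith
  have ht3nn : (0:ℝ) ≤ θ*ν^3 := by positivity
  have ht2nn : (0:ℝ) ≤ θ*ν^2 := by positivity
  have hA : (θ*ν^2)*(θ*ν^3) ≤ (9/52)*(θ*ν^3) := mul_le_mul_of_nonneg_right ht2 ht3nn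
  have hB : ε*(θ*ν^3) ≤ (1/32)*(θ*ν^3) := mul_le_mul_of_nonneg_right hε' ht3nn
  have hC : ε*(θ*ν^2) ≤ (1/32)*(9/52) := by
    calc ε*(θ*ν^2) ≤ (1/32)*(θ*ν^2) := mul_le_mul_of_nonneg_right hε' ht2nn
      _ ≤ (1/32)*(9/52) := by linarith
  have hD : ε*ε ≤ (1/32)*(1/32) := mul_le_mul hε' hε' (le_of_lt hε) (by norm_num)
  have hF : (1:ℝ) ≤ 2*(θ*ν^3) := by linarith
  have hE : ε ≤ (1/16)*(θ*ν^3) := by nlinarith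
  have hT : θ*ν^3 = (θ*ν^2)*ν := by ring
  nlinarith [hA, hB, hC, hD, hE, hF, ht2, hε.le, ht3nn, ht2nn, mul_le_mul_of_nonneg_right ht2 hν0.le]

open scoped Classical in
lemma row_drift (N : ℕ) (hN : 4 ≤ N) (ε θ : ℝ) (hε : 0 < ε) (hε' : ε ≤ 1/32)
    (hθ1 : 1/(2*(N:ℝ)^3) < θ) (hθ2 : θ ≤ 9/(52*(N:ℝ)^2)) (k : ℤ)
    (hk1 : (N:ℤ) ≤ k) (hk2 : (k:ℝ) ≤ 6*(N:ℝ)/5) :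
    (9/10)*(N:ℝ) ≤ (((Finset.Icc (N:ℤ) (4*(N:ℤ))).filter (fun j => isGood θ ε k j)).card : ℝ) := by
  set ν : ℝ := (N:ℝ) with hνdef
  have hν : (4:ℝ) ≤ ν := by rw [hνdef]; exact_mod_cast hN
  have hν0 : (0:ℝ) < ν := by linarith
  have hθ0 : 0 < θ := lt_trans (by positivity) hθ1
  have hkr : ν ≤ (k:ℝ) := by rw [hνdef]; exact_mod_cast hk1
  set s : ℝ := (3/2)*θ*ν^2 with hsdef
  have hs : 0 < s := by positivity
  -- step bound
  have hstep : ∀ j, (N:ℤ) ≤ j → j < 4*(N:ℤ) → s ≤ Xv θ k (j+1) - Xv θ k j := by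
    intro j hj _
    rw [stepX]
    have hjr : ν ≤ (j:ℝ) := by rw [hνdef]; exact_mod_cast hj
    have h1 : 3*ν^2 ≤ (k:ℝ) * ((k:ℝ) + 2*(j:ℝ) + 1) := by nlinarith
    rw [hsdef]
    calc (3/2)*θ*ν^2 = θ * (3*ν^2) / 2 := by ring
      _ ≤ θ * ((k:ℝ) * ((k:ℝ) + 2*(j:ℝ) + 1)) / 2 := by
          apply div_le_div_of_nonneg_right _ (by norm_num)
          exact mul_le_mul_of_nonneg_left h1 (le_of_lt hθ0)
  have hab : (N:ℤ) ≤ 4*(N:ℤ) := by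
    have : (0:ℤ) ≤ (N:ℤ) := Int.natCast_nonneg N
    omega
  have hcore := count_near_int (Xv θ k) (N:ℤ) (4*(N:ℤ)) s (ε/8) hs (by linarith) hab hstep
  have hcast : (((N:ℤ)):ℝ) = ν := by rw [hνdef]; push_cast; ring
  have ht3 : 1/2 < θ*ν^3 := by
    rw [div_lt_iff₀ (by positivity)] at hθ1
    nlinarith
  have ht2 : θ*ν^2 ≤ 9/52 := by
    rw [le_div_iff₀ (by positivity)] at hθ2
    nlinarith
  have hspan : Xv θ k (4*(N:ℤ)) - Xv θ k (N:ℤ) ≤ (279/25)*θ*ν^3 := by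
    rw [spanX θ k (N:ℤ), hcast]
    have h1 : (k:ℝ) * (3*(k:ℝ)*ν + 15*ν^2) ≤ (558/25)*ν^3 := by
      nlinarith [mul_nonneg (mul_nonneg (by positivity : (0:ℝ) ≤ 3*ν) (sub_nonneg.mpr hk2)) (by linarith : (0:ℝ) ≤ (k:ℝ) + 6*ν/5), mul_nonneg (by positivity : (0:ℝ) ≤ 15*ν^2) (sub_nonneg.mpr hk2)]
    calc θ * ((k:ℝ) * (3*(k:ℝ)*ν + 15*ν^2)) / 2 ≤ θ * ((558/25)*ν^3) / 2 := by
          apply div_le_div_of_nonneg_right _ (by norm_num)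
          exact mul_le_mul_of_nonneg_left h1 (le_of_lt hθ0)
      _ = (279/25)*θ*ν^3 := by ring
  set Bad := (Finset.Icc (N:ℤ) (4*(N:ℤ))).filter (fun j => ∃ n : ℤ, |Xv θ k j - (n:ℝ)| ≤ ε/8) with hBadDef
  have hbadmul : (Bad.card : ℝ) * s ≤ ((279/25)*θ*ν^3 + 2*(ε/8) + 1) * (2*(ε/8) + s) := by
    refine le_trans hcore ?_
    apply mul_le_mul_of_nonneg_right (by linarith) (by positivity)
  have hkey := key1 ν ε θ hν hε hε' hθ0 ht3 ht2
  have hbad : (Bad.card : ℝ) ≤ (2001/1000)*ν + 101/100 := by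
    rw [hsdef] at hbadmul hs
    have h := le_trans hbadmul hkey
    exact le_of_mul_le_mul_right h hs
  have hcardIcc : ((Finset.Icc (N:ℤ) (4*(N:ℤ))).card : ℝ) = 3*ν + 1 := by
    rw [Int.card_Icc]
    have h1 : ((4*(N:ℤ) + 1 - (N:ℤ)).toNat : ℤ) = 3*(N:ℤ) + 1 := by
      rw [Int.toNat_of_nonneg (by omega)]
      ring
    have h2 : (((4*(N:ℤ) + 1 - (N:ℤ)).toNat : ℕ) : ℝ) = 3*ν + 1 := by
      rw [hνdef]
      exact_mod_cast congrArg (Int.cast : ℤ → ℝ) h1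
    exact h2
  rw [row_split θ ε hε hε', hcardIcc, ← hBadDef]
  linarith
lemma key2 (ν ε r : ℝ) (hν : 4 ≤ ν) (hε : 0 < ε) (hε' : ε ≤ 1/32)
    (hr1 : 1/(2*ν) ≤ r) (hr2 : r ≤ 1/2) :
    ((3*ν-1)*r + 2*(ε/4) + 1) * (2*(ε/4) + r) ≤ ((8/5)*ν + 1) * r := by
  have hν0 : (0:ℝ) < ν := by linarith
  have hr0 : (0:ℝ) < r := lt_of_lt_of_le (by positivity) hr1
  have h2νr : 1 ≤ 2*ν*r := by
    rw [div_le_iff₀ (by positivity)] at hr1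
    linarith
  have hεr : ε*r ≤ (1/32)*r := mul_le_mul_of_nonneg_right hε' hr0.le
  have hε2 : ε*ε ≤ (1/32)*(1/32) := mul_le_mul hε' hε' hε.le (by norm_num)
  have hrr : r*r ≤ (1/2)*r := mul_le_mul_of_nonneg_right hr2 hr0.le
  have hεν : ε ≤ (1/16)*(ν*r) := by nlinarith
  have h1ν : 1 ≤ 2*(ν*r) := by nlinarith
  nlinarith [mul_le_mul_of_nonneg_left hεr (by linarith : (0:ℝ) ≤ 3*ν), mul_le_mul_of_nonneg_left hrr (by linarith : (0:ℝ) ≤ 3*ν), hεr, hε2, hεν, h1ν, hr0.le, mul_pos hν0 hr0]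

set_option maxHeartbeats 1000000 in
open scoped Classical in
lemma row_zone (N : ℕ) (hN : 4 ≤ N) (ε θ : ℝ) (hε : 0 < ε) (hε' : ε ≤ 1/32)
    (k : ℤ) (hk1 : (N:ℤ) ≤ k)
    (hflat : 1/(2*(N:ℝ)) ≤ |θ*(k:ℝ) - round (θ*(k:ℝ))|) :
    (7/10)*(N:ℝ) - 1/2 ≤ (((Finset.Icc (N:ℤ) (4*(N:ℤ))).filter (fun j => isGood θ ε k j)).card : ℝ) := by
  have hν : (4:ℝ) ≤ (N:ℝ) := by exact_mod_cast hN
  have hν0 : (0:ℝ) < (N:ℝ) := by linarith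
  set c : ℝ := θ*(k:ℝ) with hcdef
  set ρ : ℝ := c - round c with hρdef
  have hρ2 : |ρ| ≤ 1/2 := abs_sub_round c
  have hρ1 : 1/(2*(N:ℝ)) ≤ |ρ| := hflat
  have hρ0 : 0 < |ρ| := lt_of_lt_of_le (by positivity) hρ1
  set s₀ : ℝ := θ*(k:ℝ)*((k:ℝ) + 2*(N:ℝ) + 1)/2 with hs₀def
  set g : ℤ → ℝ := fun t => (if 0 ≤ ρ then s₀ else -s₀) + (t:ℝ)*|ρ| with hgdef
  have hstep : ∀ t, (0:ℤ) ≤ t → t < 3*(N:ℤ) - 1 → |ρ| ≤ g (t+1) - g t := by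
    intro t _ _
    rw [hgdef]
    push_cast
    ring_nf
    nlinarith [le_refl (|ρ|)]
  have hab : (0:ℤ) ≤ 3*(N:ℤ) - 1 := by
    have : (4:ℤ) ≤ (N:ℤ) := by exact_mod_cast hN
    omega
  have hcore := count_near_int g 0 (3*(N:ℤ) - 1) (|ρ|) (ε/4) hρ0 (by linarith) hab hstep
  have hgspan : g (3*(N:ℤ) - 1) - g 0 = (3*(N:ℝ) - 1)*|ρ| := by
    rw [hgdef]; push_cast; ring
  have hkey := key2 (N:ℝ) ε (|ρ|) hν hε hε' hρ1 hρ2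
  set BadT := (Finset.Icc (0:ℤ) (3*(N:ℤ)-1)).filter (fun t => ∃ n : ℤ, |g t - (n:ℝ)| ≤ ε/4) with hBadTdef
  have hbadT : (BadT.card : ℝ) ≤ (8/5)*(N:ℝ) + 1 := by
    have h1 : (BadT.card : ℝ) * |ρ| ≤ ((3*(N:ℝ)-1)*|ρ| + 2*(ε/4) + 1) * (2*(ε/4) + |ρ|) := by
      rw [← hgspan]; exact hcore
    have h2 := le_trans h1 hkey
    exact le_of_mul_le_mul_right h2 hρ0
  set GoodT := (Finset.Icc (0:ℤ) (3*(N:ℤ)-1)).filter (fun t => ¬ ∃ n : ℤ, |g t - (n:ℝ)| ≤ ε/4) with hGoodTdef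
  have hGoodTcard : (7/5)*(N:ℝ) - 1 ≤ (GoodT.card : ℝ) := by
    have hsplit := Finset.card_filter_add_card_filter_not
      (s := Finset.Icc (0:ℤ) (3*(N:ℤ)-1)) (p := fun t => ∃ n : ℤ, |g t - (n:ℝ)| ≤ ε/4)
    have hIccCard : ((Finset.Icc (0:ℤ) (3*(N:ℤ)-1)).card : ℝ) = 3*(N:ℝ) := by
      rw [Int.card_Icc]
      have h1 : ((3*(N:ℤ) - 1 + 1 - 0).toNat : ℤ) = 3*(N:ℤ) := by
        rw [Int.toNat_of_nonneg (by omega)]; ring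
      exact_mod_cast congrArg (Int.cast : ℤ → ℝ) h1
    have hc : ((BadT.card : ℝ)) + (GoodT.card : ℝ) = 3*(N:ℝ) := by
      rw [← hIccCard]
      exact_mod_cast congrArg (Nat.cast : ℕ → ℝ) hsplit
    linarith
  -- map into good js
  set RG := (Finset.Icc (N:ℤ) (4*(N:ℤ))).filter (fun j => isGood θ ε k j) with hRGdef
  have hmain : ∀ t ∈ GoodT, (if isGood θ ε k ((N:ℤ)+t) then (N:ℤ)+t else (N:ℤ)+t+1) ∈ RG := by
    intro t ht
    rw [hGoodTdef, Finset.mem_filter, Finset.mem_Icc] at ht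
    obtain ⟨⟨ht0, ht1⟩, hng⟩ := ht
    by_cases hg1 : isGood θ ε k ((N:ℤ)+t)
    · rw [if_pos hg1, hRGdef, Finset.mem_filter, Finset.mem_Icc]
      exact ⟨⟨by omega, by omega⟩, hg1⟩
    · rw [if_neg hg1, hRGdef, Finset.mem_filter, Finset.mem_Icc]
      refine ⟨⟨by omega, by omega⟩, ?_⟩
      by_contra hg2
      apply hng
      obtain ⟨p, hp⟩ := (fract_bad_iff _ (ε/8) (by linarith) (by linarith)).mp hg1
      obtain ⟨q, hq⟩ := (fract_bad_iff _ (ε/8) (by linarith) (by linarith)).mp hg2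
      have hstepval : Xv θ k ((N:ℤ)+t+1) - Xv θ k ((N:ℤ)+t)
          = s₀ + (t:ℝ)*(round c : ℝ) + (t:ℝ)*ρ := by
        rw [stepX, hs₀def, hρdef, hcdef]
        push_cast
        ring
      rcases le_or_gt 0 ρ with hρsgn | hρsgn
      · refine ⟨q - p - t*(round c), ?_⟩
        have heq : g t - ((q - p - t*(round c) : ℤ) : ℝ)
            = (Xv θ k ((N:ℤ)+t+1) - (q:ℝ)) - (Xv θ k ((N:ℤ)+t) - (p:ℝ)) := by
          rw [hgdef]
          simp only [if_pos hρsgn, abs_of_nonneg hρsgn]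
          push_cast
          linear_combination -hstepval
        rw [heq]
        calc |(Xv θ k ((N:ℤ)+t+1) - (q:ℝ)) - (Xv θ k ((N:ℤ)+t) - (p:ℝ))|
            ≤ |Xv θ k ((N:ℤ)+t+1) - (q:ℝ)| + |Xv θ k ((N:ℤ)+t) - (p:ℝ)| := abs_sub _ _
          _ ≤ ε/4 := by linarith [hp, hq]
      · refine ⟨-(q - p - t*(round c)), ?_⟩
        have heq : g t - ((-(q - p - t*(round c)) : ℤ) : ℝ)
            = -((Xv θ k ((N:ℤ)+t+1) - (q:ℝ)) - (Xv θ k ((N:ℤ)+t) - (p:ℝ))) := by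
          rw [hgdef]
          simp only [if_neg (not_le.mpr hρsgn), abs_of_neg hρsgn]
          push_cast
          linear_combination hstepval
        rw [heq, abs_neg]
        calc |(Xv θ k ((N:ℤ)+t+1) - (q:ℝ)) - (Xv θ k ((N:ℤ)+t) - (p:ℝ))|
            ≤ |Xv θ k ((N:ℤ)+t+1) - (q:ℝ)| + |Xv θ k ((N:ℤ)+t) - (p:ℝ)| := abs_sub _ _
          _ ≤ ε/4 := by linarith [hp, hq]
  have hfiber : ∀ v ∈ RG, (GoodT.filter
      (fun t => (if isGood θ ε k ((N:ℤ)+t) then (N:ℤ)+t else (N:ℤ)+t+1) = v)).card ≤ 2 := by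
    intro v _
    have hsub : GoodT.filter
        (fun t => (if isGood θ ε k ((N:ℤ)+t) then (N:ℤ)+t else (N:ℤ)+t+1) = v)
        ⊆ {v - (N:ℤ), v - (N:ℤ) - 1} := by
      intro t ht
      rw [Finset.mem_filter] at ht
      obtain ⟨_, hv⟩ := ht
      by_cases hg1 : isGood θ ε k ((N:ℤ)+t)
      · rw [if_pos hg1] at hv
        simp only [Finset.mem_insert, Finset.mem_singleton]
        omega
      · rw [if_neg hg1] at hv
        simp only [Finset.mem_insert, Finset.mem_singleton]
        omega
    refine le_trans (Finset.card_le_card hsub) ?_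
    refine le_trans (Finset.card_insert_le _ _) ?_
    simp
  have hcount := Finset.card_le_mul_card_image_of_maps_to hmain 2 hfiber
  have : (GoodT.card : ℝ) ≤ 2 * (RG.card : ℝ) := by exact_mod_cast hcount
  linarith

open scoped Classical in
lemma rows_to_grid (θ ε : ℝ) (N : ℕ) (K : Finset ℤ) (hK : K ⊆ Finset.Icc (N:ℤ) (3*(N:ℤ))) :
    ∑ k ∈ K, ((Finset.Icc (N:ℤ) (4*(N:ℤ))).filter (fun j => isGood θ ε k j)).card
      ≤ ((Finset.Icc (N:ℤ) (3*(N:ℤ)) ×ˢ Finset.Icc (N:ℤ) (4*(N:ℤ))).filter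
          (fun p => isGood θ ε p.1 p.2)).card := by
  have hdisj : ∀ k1 ∈ K, ∀ k2 ∈ K, k1 ≠ k2 → Disjoint
      (((Finset.Icc (N:ℤ) (4*(N:ℤ))).filter (fun j => isGood θ ε k1 j)).image (fun j => (k1, j)))
      (((Finset.Icc (N:ℤ) (4*(N:ℤ))).filter (fun j => isGood θ ε k2 j)).image (fun j => (k2, j))) := by
    intro k1 _ k2 _ hne
    rw [Finset.disjoint_left]
    intro p hp1 hp2
    rw [Finset.mem_image] at hp1 hp2
    obtain ⟨j1, _, rfl⟩ := hp1
    obtain ⟨j2, _, h2⟩ := hp2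
    have : k2 = k1 := congrArg Prod.fst h2
    exact hne this.symm
  calc ∑ k ∈ K, ((Finset.Icc (N:ℤ) (4*(N:ℤ))).filter (fun j => isGood θ ε k j)).card
      = ∑ k ∈ K, (((Finset.Icc (N:ℤ) (4*(N:ℤ))).filter (fun j => isGood θ ε k j)).image
          (fun j => (k, j))).card := by
        refine Finset.sum_congr rfl ?_
        intro k _
        rw [Finset.card_image_of_injective _ (fun a b h => by injection h)]
    _ = (K.biUnion fun k => ((Finset.Icc (N:ℤ) (4*(N:ℤ))).filter
          (fun j => isGood θ ε k j)).image (fun j => (k, j))).card :=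
        (Finset.card_biUnion hdisj).symm
    _ ≤ _ := by
        apply Finset.card_le_card
        intro p hp
        rw [Finset.mem_biUnion] at hp
        obtain ⟨k, hkK, hp⟩ := hp
        rw [Finset.mem_image] at hp
        obtain ⟨j, hj, rfl⟩ := hp
        rw [Finset.mem_filter] at hj ⊢
        rw [Finset.mem_product, Finset.mem_Icc]
        have := hK hkK
        rw [Finset.mem_Icc] at this
        exact ⟨⟨this, hj.1⟩, hj.2⟩

lemma int_small (z : ℤ) (h1 : (-1:ℝ) < (z:ℝ)) (h2 : (z:ℝ) < 1) : z = 0 := by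
  have ha : -1 < z := by exact_mod_cast h1
  have hb : z < 1 := by exact_mod_cast h2
  omega


set_option maxHeartbeats 1000000 in
/-- Lemma A.5: for `ε/N³ ≤ θ ≤ 1/2`, at least `N²/32` of the pairs `(k,j)` with
`N ≤ k ≤ 3N`, `N ≤ j ≤ 4N` satisfy `ε/8 < {θ·a₂(k,j)} < 1 - ε/8`, where
`a₂(k,j) = kj(k+j)/2`. -/
theorem stmt9 (N : ℕ) (hN : 4 ≤ N) (ε : ℝ) (hε : 0 < ε) (hε' : ε ≤ 1 / 32)
    (θ : ℝ) (hθ : ε / (N : ℝ) ^ 3 ≤ θ) (hθ' : θ ≤ 1 / 2) :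
    (N : ℝ) ^ 2 / 32 ≤
      ({p : ℤ × ℤ | (N : ℤ) ≤ p.1 ∧ p.1 ≤ 3 * N ∧ (N : ℤ) ≤ p.2 ∧ p.2 ≤ 4 * N ∧
        ε / 8 < Int.fract (θ * (((p.1 * p.2 * (p.1 + p.2) : ℤ) : ℝ) / 2)) ∧
        Int.fract (θ * (((p.1 * p.2 * (p.1 + p.2) : ℤ) : ℝ) / 2)) < 1 - ε / 8}.ncard : ℝ) := by
  classical
  have hν : (4:ℝ) ≤ (N:ℝ) := by exact_mod_cast hN
  have hν0 : (0:ℝ) < (N:ℝ) := by linarith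
  have hθ0 : 0 < θ := lt_of_lt_of_le (by positivity) hθ
  have hnint : (4:ℤ) ≤ (N:ℤ) := by exact_mod_cast hN
  set GF := ((Finset.Icc (N:ℤ) (3*(N:ℤ)) ×ˢ Finset.Icc (N:ℤ) (4*(N:ℤ))).filter
      (fun p => isGood θ ε p.1 p.2)) with hGF
  have hset : {p : ℤ × ℤ | (N : ℤ) ≤ p.1 ∧ p.1 ≤ 3 * N ∧ (N : ℤ) ≤ p.2 ∧ p.2 ≤ 4 * N ∧
        ε / 8 < Int.fract (θ * (((p.1 * p.2 * (p.1 + p.2) : ℤ) : ℝ) / 2)) ∧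
        Int.fract (θ * (((p.1 * p.2 * (p.1 + p.2) : ℤ) : ℝ) / 2)) < 1 - ε / 8} = ↑GF := by
    ext p
    rw [hGF, Finset.mem_coe, Finset.mem_filter]
    simp only [hGF, Finset.mem_coe, Finset.mem_filter, Finset.coe_filter, Finset.mem_product, Finset.mem_Icc, Set.mem_setOf_eq,
      isGood, Xv]
    tauto
  rw [hset, Set.ncard_coe_finset]
  -- Case 1 : θ small
  by_cases hC1 : θ ≤ 1/(2*(N:ℝ)^3)
  · set m : ℤ := (N:ℤ)/5 with hmdef
    have hm0 : 0 ≤ m := by positivity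
    have hm5 : 5*m ≤ (N:ℤ) := by omega
    have hm5' : (N:ℤ) - 4 ≤ 5*m := by omega
    have hmr : (m:ℝ) ≤ (N:ℝ)/5 := by
      have : ((5*m : ℤ):ℝ) ≤ ((N:ℤ):ℝ) := by exact_mod_cast hm5
      push_cast at this
      linarith
    have hmr' : ((N:ℝ) - 4)/5 ≤ (m:ℝ) := by
      have : (((N:ℤ) - 4 : ℤ):ℝ) ≤ ((5*m : ℤ):ℝ) := by exact_mod_cast hm5'
      push_cast at this
      linarith
    have hBsub : (Finset.Icc (N:ℤ) ((N:ℤ)+m) ×ˢ Finset.Icc (N:ℤ) ((N:ℤ)+m)) ⊆ GF := by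
      intro p hp
      rw [Finset.mem_product, Finset.mem_Icc, Finset.mem_Icc] at hp
      obtain ⟨⟨h11, h12⟩, h21, h22⟩ := hp
      rw [hGF, Finset.mem_filter, Finset.mem_product, Finset.mem_Icc, Finset.mem_Icc]
      refine ⟨⟨⟨h11, by omega⟩, h21, by omega⟩, ?_⟩
      -- goodness
      have hK1 : (N:ℝ) ≤ (p.1:ℝ) := by exact_mod_cast h11
      have hK2 : (p.1:ℝ) ≤ 6*(N:ℝ)/5 := by
        have : (p.1:ℝ) ≤ ((N:ℤ):ℝ) + (m:ℝ) := by exact_mod_cast h12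
        push_cast at this
        linarith
      have hJ1 : (N:ℝ) ≤ (p.2:ℝ) := by exact_mod_cast h21
      have hJ2 : (p.2:ℝ) ≤ 6*(N:ℝ)/5 := by
        have : (p.2:ℝ) ≤ ((N:ℤ):ℝ) + (m:ℝ) := by exact_mod_cast h22
        push_cast at this
        linarith
      have hVeq : Xv θ p.1 p.2 = θ * ((p.1:ℝ)*(p.2:ℝ)*((p.1:ℝ)+(p.2:ℝ))/2) := by
        unfold Xv; push_cast; ring
      have hK0 : (0:ℝ) < (p.1:ℝ) := lt_of_lt_of_le hν0 hK1
      have hJ0 : (0:ℝ) < (p.2:ℝ) := lt_of_lt_of_le hν0 hJ1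
      have hKJ : (N:ℝ)*(N:ℝ) ≤ (p.1:ℝ)*(p.2:ℝ) := mul_le_mul hK1 hJ1 hν0.le (by linarith)
      have hKJ2 : (p.1:ℝ)*(p.2:ℝ) ≤ (6*(N:ℝ)/5)*(6*(N:ℝ)/5) :=
        mul_le_mul hK2 hJ2 hJ0.le (by positivity)
      have hPlow : 2*(N:ℝ)^3 ≤ (p.1:ℝ)*(p.2:ℝ)*((p.1:ℝ)+(p.2:ℝ)) := by
        nlinarith [mul_le_mul hKJ (show 2*(N:ℝ) ≤ (p.1:ℝ)+(p.2:ℝ) by linarith)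
          (by positivity) (mul_nonneg hK0.le hJ0.le)]
      have hPhigh : (p.1:ℝ)*(p.2:ℝ)*((p.1:ℝ)+(p.2:ℝ)) ≤ (432/125)*(N:ℝ)^3 := by
        nlinarith [mul_le_mul hKJ2 (show (p.1:ℝ)+(p.2:ℝ) ≤ 12*(N:ℝ)/5 by linarith)
          (by linarith) (by positivity)]
      have hVlow : ε ≤ Xv θ p.1 p.2 := by
        rw [hVeq]
        have h1 : (ε/(N:ℝ)^3) * ((N:ℝ)^3) ≤ θ * ((p.1:ℝ)*(p.2:ℝ)*((p.1:ℝ)+(p.2:ℝ))/2) := by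
          apply mul_le_mul hθ (by nlinarith) (by positivity) (le_of_lt hθ0)
        have h2 : (ε/(N:ℝ)^3) * ((N:ℝ)^3) = ε := by field_simp
        linarith
      have hVhigh : Xv θ p.1 p.2 ≤ 108/125 := by
        rw [hVeq]
        have h1 : θ * ((p.1:ℝ)*(p.2:ℝ)*((p.1:ℝ)+(p.2:ℝ))/2)
            ≤ (1/(2*(N:ℝ)^3)) * ((216/125)*(N:ℝ)^3) := by
          apply mul_le_mul hC1 (by nlinarith) (by nlinarith [mul_nonneg hK0.le hJ0.le]) (by positivity)
        have h2 : (1/(2*(N:ℝ)^3)) * ((216/125)*(N:ℝ)^3) = 108/125 := by field_simp; ring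
        linarith
      have hfr : Int.fract (Xv θ p.1 p.2) = Xv θ p.1 p.2 :=
        Int.fract_eq_self.mpr ⟨by linarith, by linarith⟩
      constructor
      · rw [hfr]; linarith
      · rw [hfr]; linarith
    have hcardB : ((N:ℝ)+1)^2/25 ≤ ((Finset.Icc (N:ℤ) ((N:ℤ)+m) ×ˢ Finset.Icc (N:ℤ) ((N:ℤ)+m)).card : ℝ) := by
      rw [Finset.card_product, Int.card_Icc]
      have h1 : (((N:ℤ)+m+1-(N:ℤ)).toNat : ℤ) = m + 1 := by omega
      have h2 : ((((N:ℤ)+m+1-(N:ℤ)).toNat : ℕ) : ℝ) = (m:ℝ) + 1 := by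
        exact_mod_cast congrArg (Int.cast : ℤ → ℝ) h1
      push_cast
      rw [h2]
      nlinarith
    have hfin := Finset.card_le_card hBsub
    have hfinr : (((Finset.Icc (N:ℤ) ((N:ℤ)+m) ×ˢ Finset.Icc (N:ℤ) ((N:ℤ)+m)).card : ℝ)) ≤ (GF.card : ℝ) := by
      exact_mod_cast hfin
    nlinarith
  by_cases hC2 : θ ≤ 9/(52*(N:ℝ)^2)
  · -- drift case
    have hC1' : 1/(2*(N:ℝ)^3) < θ := not_le.mp hC1
    set K := Finset.Icc (N:ℤ) ((N:ℤ) + (N:ℤ)/5) with hKdef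
    have hKsub : K ⊆ Finset.Icc (N:ℤ) (3*(N:ℤ)) := by
      rw [hKdef]
      apply Finset.Icc_subset_Icc le_rfl
      omega
    have hrow : ∀ k ∈ K, (9/10)*(N:ℝ)
        ≤ (((Finset.Icc (N:ℤ) (4*(N:ℤ))).filter (fun j => isGood θ ε k j)).card : ℝ) := by
      intro k hk
      rw [hKdef, Finset.mem_Icc] at hk
      apply row_drift N hN ε θ hε hε' hC1' hC2 k hk.1
      have h5 : 5*((N:ℤ)/5) ≤ (N:ℤ) := by omega
      have hkr : (k:ℝ) ≤ ((N:ℤ):ℝ) + (((N:ℤ)/5 : ℤ):ℝ) := by exact_mod_cast hk.2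
      have h5r : (((N:ℤ)/5 : ℤ):ℝ) ≤ (N:ℝ)/5 := by
        have h := (@Int.cast_le ℝ _ _ _).mpr h5
        push_cast at h
        linarith
      push_cast at hkr
      linarith
    have hsum := rows_to_grid θ ε N K hKsub
    have hsumr : ∑ k ∈ K, (((Finset.Icc (N:ℤ) (4*(N:ℤ))).filter
        (fun j => isGood θ ε k j)).card : ℝ) ≤ (GF.card : ℝ) := by
      rw [hGF]
      exact_mod_cast hsum
    have hlow := Finset.card_nsmul_le_sum K _ _ hrow
    rw [nsmul_eq_mul] at hlow
    have hKcard : ((N:ℝ)+1)/5 ≤ (K.card : ℝ) := by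
      rw [hKdef, Int.card_Icc]
      have h1 : (((N:ℤ) + (N:ℤ)/5 + 1 - (N:ℤ)).toNat : ℤ) = (N:ℤ)/5 + 1 := by omega
      have h2 : ((((N:ℤ) + (N:ℤ)/5 + 1 - (N:ℤ)).toNat : ℕ) : ℝ) = (((N:ℤ)/5 : ℤ):ℝ) + 1 := by
        exact_mod_cast congrArg (Int.cast : ℤ → ℝ) h1
      rw [h2]
      have h5 : (N:ℤ) - 4 ≤ 5*((N:ℤ)/5) := by omega
      have h5r : ((N:ℝ) - 4)/5 ≤ (((N:ℤ)/5 : ℤ):ℝ) := by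
        have h := (@Int.cast_le ℝ _ _ _).mpr h5
        push_cast at h
        linarith
      linarith
    nlinarith [mul_le_mul_of_nonneg_right hKcard (by positivity : (0:ℝ) ≤ (9/10)*(N:ℝ))]
  · -- C4
    have hC2' : 9/(52*(N:ℝ)^2) < θ := not_le.mp hC2
    set NF := (Finset.Icc (N:ℤ) (3*(N:ℤ))).filter
        (fun k : ℤ => ¬ (|θ*(k:ℝ) - round (θ*(k:ℝ))| < 1/(2*(N:ℝ)))) with hNFdef
    set FF := (Finset.Icc (N:ℤ) (3*(N:ℤ))).filter
        (fun k : ℤ => |θ*(k:ℝ) - round (θ*(k:ℝ))| < 1/(2*(N:ℝ))) with hFFdef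
    by_cases hbr : (N:ℝ)/9 ≤ (NF.card : ℝ)
    · -- branch A : many nonflat rows
      have hNFsub : NF ⊆ Finset.Icc (N:ℤ) (3*(N:ℤ)) := by
        rw [hNFdef]; exact Finset.filter_subset _ _
      have hrow : ∀ k ∈ NF, (7/10)*(N:ℝ) - 1/2
          ≤ (((Finset.Icc (N:ℤ) (4*(N:ℤ))).filter (fun j => isGood θ ε k j)).card : ℝ) := by
        intro k hk
        rw [hNFdef, Finset.mem_filter, Finset.mem_Icc] at hk
        exact row_zone N hN ε θ hε hε' k hk.1.1 (not_lt.mp hk.2)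
      have hsum := rows_to_grid θ ε N NF hNFsub
      have hsumr : ∑ k ∈ NF, (((Finset.Icc (N:ℤ) (4*(N:ℤ))).filter
          (fun j => isGood θ ε k j)).card : ℝ) ≤ (GF.card : ℝ) := by
        rw [hGF]
        exact_mod_cast hsum
      have hlow := Finset.card_nsmul_le_sum NF _ _ hrow
      rw [nsmul_eq_mul] at hlow
      nlinarith [mul_le_mul_of_nonneg_right hbr (by nlinarith : (0:ℝ) ≤ (7/10)*(N:ℝ) - 1/2)]
    · -- branch B : almost all rows flat, contradiction
      exfalso
      have hNFs : (NF.card : ℝ) < (N:ℝ)/9 := not_le.mp hbr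
      have hIccC : ((Finset.Icc (N:ℤ) (3*(N:ℤ))).card : ℝ) = 2*(N:ℝ) + 1 := by
        rw [Int.card_Icc]
        have h1 : ((3*(N:ℤ) + 1 - (N:ℤ)).toNat : ℤ) = 2*(N:ℤ) + 1 := by omega
        have h2 : (((3*(N:ℤ) + 1 - (N:ℤ)).toNat : ℕ) : ℝ) = 2*(N:ℝ) + 1 := by
          exact_mod_cast congrArg (Int.cast : ℤ → ℝ) h1
        exact h2
      have hsplitc := Finset.card_filter_add_card_filter_not
        (s := Finset.Icc (N:ℤ) (3*(N:ℤ)))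
        (p := fun k : ℤ => |θ*(k:ℝ) - round (θ*(k:ℝ))| < 1/(2*(N:ℝ)))
      have hFFc : 2*(N:ℝ) + 1 - (N:ℝ)/9 < (FF.card : ℝ) := by
        have hcast : (FF.card : ℝ) + (NF.card : ℝ) = 2*(N:ℝ) + 1 := by
          rw [← hIccC, ← Nat.cast_add]
          exact congrArg (Nat.cast : ℕ → ℝ) hsplitc
        linarith
      -- existence of flat pairs at distance d
      have hpair : ∀ d : ℤ, 1 ≤ d → d ≤ 4 → ∃ k : ℤ, (N:ℤ) ≤ k ∧
          |θ*(k:ℝ) - round (θ*(k:ℝ))| < 1/(2*(N:ℝ)) ∧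
          |θ*(((k+d) : ℤ):ℝ) - round (θ*(((k+d) : ℤ):ℝ))| < 1/(2*(N:ℝ)) := by
        intro d hd1 hd4
        set Sd := (Finset.Icc (N:ℤ) (3*(N:ℤ)-d)).filter
          (fun k : ℤ => |θ*(k:ℝ) - round (θ*(k:ℝ))| < 1/(2*(N:ℝ)) ∧
            |θ*(((k+d) : ℤ):ℝ) - round (θ*(((k+d) : ℤ):ℝ))| < 1/(2*(N:ℝ))) with hSdDef
        set Cd := (Finset.Icc (N:ℤ) (3*(N:ℤ)-d)).filter
          (fun k : ℤ => ¬ (|θ*(k:ℝ) - round (θ*(k:ℝ))| < 1/(2*(N:ℝ)) ∧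
            |θ*(((k+d) : ℤ):ℝ) - round (θ*(((k+d) : ℤ):ℝ))| < 1/(2*(N:ℝ)))) with hCdDef
      -- Cd is covered by two shifted copies of NF
        have hCdsub : Cd ⊆ ((Finset.Icc (N:ℤ) (3*(N:ℤ)-d)).filter
              (fun k : ℤ => ¬ (|θ*(k:ℝ) - round (θ*(k:ℝ))| < 1/(2*(N:ℝ))))) ∪
            ((Finset.Icc (N:ℤ) (3*(N:ℤ)-d)).filter
              (fun k => ¬ (|θ*(((k+d) : ℤ):ℝ) - round (θ*(((k+d) : ℤ):ℝ))| < 1/(2*(N:ℝ))))) := by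
          intro a ha
          rw [hCdDef, Finset.mem_filter] at ha
          rw [Finset.mem_union, Finset.mem_filter, Finset.mem_filter]
          rcases not_and_or.mp ha.2 with h | h
          · exact Or.inl ⟨ha.1, h⟩
          · exact Or.inr ⟨ha.1, h⟩
        have hc1 : ((Finset.Icc (N:ℤ) (3*(N:ℤ)-d)).filter
            (fun k : ℤ => ¬ (|θ*(k:ℝ) - round (θ*(k:ℝ))| < 1/(2*(N:ℝ))))).card ≤ NF.card := by
          apply Finset.card_le_card
          rw [hNFdef]
          apply Finset.filter_subset_filter
          apply Finset.Icc_subset_Icc le_rfl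
          omega
        have hc2 : ((Finset.Icc (N:ℤ) (3*(N:ℤ)-d)).filter
            (fun k => ¬ (|θ*(((k+d) : ℤ):ℝ) - round (θ*(((k+d) : ℤ):ℝ))| < 1/(2*(N:ℝ))))).card
            ≤ NF.card := by
          apply Finset.card_le_card_of_injOn (fun k => k + d)
          · intro a ha
            rw [Finset.mem_coe, Finset.mem_filter, Finset.mem_Icc] at ha
            obtain ⟨⟨ha1, ha2⟩, ha3⟩ := ha
            rw [Finset.mem_coe, hNFdef, Finset.mem_filter, Finset.mem_Icc]
            beta_reduce
            exact ⟨⟨by omega, by omega⟩, ha3⟩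
          · intro a _ b _ hab
            exact add_right_cancel hab
        have hCdcard : (Cd.card : ℝ) < 2*((N:ℝ)/9) := by
          have h1 := Finset.card_le_card hCdsub
          have h2 := Finset.card_union_le
            ((Finset.Icc (N:ℤ) (3*(N:ℤ)-d)).filter
              (fun k : ℤ => ¬ (|θ*(k:ℝ) - round (θ*(k:ℝ))| < 1/(2*(N:ℝ)))))
            ((Finset.Icc (N:ℤ) (3*(N:ℤ)-d)).filter
              (fun k => ¬ (|θ*(((k+d) : ℤ):ℝ) - round (θ*(((k+d) : ℤ):ℝ))| < 1/(2*(N:ℝ)))))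
          have h3 : Cd.card ≤ NF.card + NF.card := le_trans h1 (le_trans h2 (by omega))
          have h4 : (Cd.card : ℝ) ≤ (NF.card : ℝ) + (NF.card : ℝ) := by exact_mod_cast h3
          linarith
        have hsplitd := Finset.card_filter_add_card_filter_not
          (s := Finset.Icc (N:ℤ) (3*(N:ℤ)-d))
          (p := fun k : ℤ => |θ*(k:ℝ) - round (θ*(k:ℝ))| < 1/(2*(N:ℝ)) ∧
            |θ*(((k+d) : ℤ):ℝ) - round (θ*(((k+d) : ℤ):ℝ))| < 1/(2*(N:ℝ)))
        have hIccdC : ((Finset.Icc (N:ℤ) (3*(N:ℤ)-d)).card : ℝ) = 2*(N:ℝ) + 1 - (d:ℝ) := by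
          rw [Int.card_Icc]
          have h1 : ((3*(N:ℤ) - d + 1 - (N:ℤ)).toNat : ℤ) = 2*(N:ℤ) + 1 - d := by omega
          have h2 : (((3*(N:ℤ) - d + 1 - (N:ℤ)).toNat : ℕ) : ℝ) = 2*(N:ℝ) + 1 - (d:ℝ) := by
            exact_mod_cast congrArg (Int.cast : ℤ → ℝ) h1
          exact h2
        have hSdpos : (0:ℝ) < (Sd.card : ℝ) := by
          have hcast : (Sd.card : ℝ) + (Cd.card : ℝ) = 2*(N:ℝ) + 1 - (d:ℝ) := by
            rw [← hIccdC, ← Nat.cast_add]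
            exact congrArg (Nat.cast : ℕ → ℝ) hsplitd
          have hdr : (d:ℝ) ≤ 4 := by exact_mod_cast hd4
          linarith
        have hSne : Sd.Nonempty := by
          apply Finset.card_pos.mp
          exact_mod_cast hSdpos
        obtain ⟨k, hk⟩ := hSne
        rw [hSdDef, Finset.mem_filter, Finset.mem_Icc] at hk
        exact ⟨k, hk.1.1, hk.2.1, hk.2.2⟩
      -- from a flat pair at distance d, θ·d is close to an integer, hence small
      have hgen : ∀ d : ℤ, 1 ≤ d → d ≤ 4 → θ*(d:ℝ) + 1/(N:ℝ) ≤ 1 → θ*(d:ℝ) < 1/(N:ℝ) := by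
        intro d hd1 hd4 hub
        obtain ⟨k, hka, hf, hf'⟩ := hpair d hd1 hd4
        set m := round (θ*(((k+d) : ℤ):ℝ)) - round (θ*(k:ℝ)) with hmdef2
        have heq : θ*(d:ℝ) - (m:ℝ) = (θ*(((k+d) : ℤ):ℝ) - round (θ*(((k+d) : ℤ):ℝ)))
            - (θ*(k:ℝ) - round (θ*(k:ℝ))) := by
          rw [hmdef2]
          push_cast
          ring
        have habs : |θ*(d:ℝ) - (m:ℝ)| < 1/(N:ℝ) := by
          rw [heq]
          refine lt_of_le_of_lt (abs_sub _ _) ?_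
          have hhalf : 1/(2*(N:ℝ)) = (1/(N:ℝ))/2 := by
            rw [div_div]
            ring_nf
          linarith [hf, hf']
        rw [abs_lt] at habs
        have hdp : (0:ℝ) < (d:ℝ) := by exact_mod_cast hd1
        have hm0 : m = 0 := by
          apply int_small
          · nlinarith [mul_pos hθ0 hdp]
          · linarith
        rw [hm0] at habs
        push_cast at habs
        linarith [habs.2]
      have hinvN : 1/(N:ℝ) ≤ 1/4 := by
        rw [div_le_div_iff₀ hν0 (by norm_num)]
        linarith
      have hd1 : θ < 1/(N:ℝ) := by
        have h := hgen 1 le_rfl (by norm_num) (by push_cast; linarith)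
        push_cast at h
        linarith
      have hd2 : θ*2 < 1/(N:ℝ) := by
        have h := hgen 2 (by norm_num) (by norm_num) (by push_cast; linarith)
        push_cast at h
        linarith
      have hd4 : θ*4 < 1/(N:ℝ) := by
        have h := hgen 4 (by norm_num) (by norm_num) (by push_cast; linarith)
        push_cast at h
        linarith
      -- all flat k have θ·k < 1/(2N)
      have hflat0 : ∀ k ∈ FF, θ*(k:ℝ) < 1/(2*(N:ℝ)) := by
        intro k hk
        rw [hFFdef, Finset.mem_filter, Finset.mem_Icc] at hk
        obtain ⟨⟨hka, hkb⟩, hfk⟩ := hk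
        have hkr3 : (k:ℝ) ≤ 3*(N:ℝ) := by exact_mod_cast hkb
        have hkr0 : (N:ℝ) ≤ (k:ℝ) := by exact_mod_cast hka
        have hub : θ*(k:ℝ) < 3/4 := by
          have e1 : (1/(N:ℝ))*(3*(N:ℝ)/4) = 3/4 := by field_simp
          nlinarith [mul_le_mul_of_nonneg_left hkr3 hθ0.le,
            mul_lt_mul_of_pos_right hd4 (by positivity : (0:ℝ) < 3*(N:ℝ)/4)]
        rw [abs_lt] at hfk
        have h2N : 1/(2*(N:ℝ)) ≤ 1/8 := by
          rw [div_le_div_iff₀ (by positivity) (by norm_num)]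
          linarith
        have hm0 : round (θ*(k:ℝ)) = 0 := by
          apply int_small
          · nlinarith [mul_nonneg hθ0.le (by linarith : (0:ℝ) ≤ (k:ℝ))]
          · linarith
        rw [hm0] at hfk
        push_cast at hfk
        linarith [hfk.2]
      -- the largest flat k forces θ to be too small
      have hFFne : FF.Nonempty := by
        apply Finset.card_pos.mp
        have h0 : (0:ℝ) < (FF.card : ℝ) := by linarith
        exact_mod_cast h0
      set kx := FF.max' hFFne with hkxdef
      have hkxFF : kx ∈ FF := FF.max'_mem hFFne
      have hFFsub2 : FF ⊆ Finset.Icc (N:ℤ) kx := by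
        intro a ha
        rw [Finset.mem_Icc]
        have ha' := ha
        rw [hFFdef, Finset.mem_filter, Finset.mem_Icc] at ha'
        exact ⟨ha'.1.1, Finset.le_max' _ _ ha⟩
      have hkxge : (N:ℤ) ≤ kx := by
        have := hkxFF
        rw [hFFdef, Finset.mem_filter, Finset.mem_Icc] at this
        exact this.1.1
      have hcardle := Finset.card_le_card hFFsub2
      have hcardr : (FF.card : ℝ) ≤ (kx:ℝ) + 1 - (N:ℝ) := by
        rw [Int.card_Icc] at hcardle
        have h1 : (FF.card : ℤ) ≤ kx + 1 - (N:ℤ) := by omega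
        have h2 := (@Int.cast_le ℝ _ _ _).mpr h1
        push_cast at h2
        linarith
      have hkxr : 26*(N:ℝ)/9 < (kx:ℝ) := by linarith
      have hkxflat := hflat0 kx hkxFF
      have e2 : (9/(52*(N:ℝ)^2))*(26*(N:ℝ)/9) = 1/(2*(N:ℝ)) := by
        field_simp
        ring
      have t1 := mul_lt_mul_of_pos_right hC2' (by positivity : (0:ℝ) < 26*(N:ℝ)/9)
      have t2 := mul_lt_mul_of_pos_left hkxr hθ0
      linarith
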